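/- Let C₁, C₂, C₄, λ, M₀ > 0 with C₂ λ M₀ ≥ 8 C₁, and let Y : [0,T) → ℝ≥0 be differentiable with Y(0)² ≤ M₀²/(2C₄) and satisfying Y'(t) ≤ C₁M₀ + (C₂/2)λ(C₄ Y(t)² − M₀²) for all t. Then Y(t) ≤ Y(0) − C₁ M₀ t for all t ∈ [0,T), and consequently T ≤ Y(0)/(C₁M₀). -/

import Mathlib

open Real Set

set_option maxHeartbeats 1000000

private lemma aux_bound_18 (C₁ C₂ C₄ lam M₀ K δ Yx Y0 Dx : ℝ)
    (hC₁ : 0 < C₁) (hC₂ : 0 < C₂) (hC₄ : 0 < C₄) (hlam : 0 < lam) (hM : 0 < M₀)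
    (hbig : 8 * C₁ ≤ C₂ * lam * M₀)
    (hK : K = C₂ / 2 * lam * C₄ * (2 * Y0 + 1) + 1)
    (hδpos : 0 < δ) (hδ1 : δ ≤ 1)
    (hYxle : Yx ≤ Y0 + δ) (hYxnn : 0 ≤ Yx) (hY0nn : 0 ≤ Y0)
    (hY0 : Y0 ^ 2 ≤ M₀ ^ 2 / (2 * C₄))
    (hDx : Dx ≤ C₁ * M₀ + C₂ / 2 * lam * (C₄ * Yx ^ 2 - M₀ ^ 2)) :
    Dx < -(C₁ * M₀) + K * δ := by
  have h2 : C₄ * Y0 ^ 2 ≤ M₀ ^ 2 / 2 := by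
    rw [le_div_iff₀ (by positivity)] at hY0
    nlinarith
  have h3 : C₄ * δ * δ ≤ C₄ * δ := by
    have := mul_le_mul_of_nonneg_left hδ1 (le_of_lt (mul_pos hC₄ hδpos))
    nlinarith
  have h1 : Yx ^ 2 ≤ (Y0 + δ) ^ 2 := by nlinarith
  have h1' : C₄ * Yx ^ 2 ≤ C₄ * (Y0 + δ) ^ 2 := mul_le_mul_of_nonneg_left h1 hC₄.le
  have hsq : C₄ * Yx ^ 2 ≤ M₀ ^ 2 / 2 + C₄ * (2 * Y0 + 1) * δ := by nlinarith
  have h8 : 2 * (C₁ * M₀) ≤ C₂ / 2 * lam * (M₀ ^ 2 / 2) := by nlinarith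
  have h9 : C₂ / 2 * lam * (C₄ * Yx ^ 2 - M₀ ^ 2) ≤
      -(2 * (C₁ * M₀)) + C₂ / 2 * lam * (C₄ * (2 * Y0 + 1)) * δ := by
    nlinarith [mul_le_mul_of_nonneg_left hsq (by positivity : (0:ℝ) ≤ C₂ / 2 * lam)]
  nlinarith [hK, mul_pos hC₁ hM]

theorem stmt_18 (T C₁ C₂ C₄ lam M₀ : ℝ) (hT : 0 < T) (hC₁ : 0 < C₁) (hC₂ : 0 < C₂)
    (hC₄ : 0 < C₄) (hlam : 0 < lam) (hM : 0 < M₀)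
    (hbig : 8 * C₁ ≤ C₂ * lam * M₀)
    (Y D : ℝ → ℝ)
    (hY : ∀ t : ℝ, 0 ≤ t → t < T → HasDerivAt Y (D t) t)
    (hD : ∀ t : ℝ, 0 ≤ t → t < T →
      D t ≤ C₁ * M₀ + (C₂ / 2) * lam * (C₄ * (Y t) ^ 2 - M₀ ^ 2))
    (hnn : ∀ t : ℝ, 0 ≤ t → t < T → 0 ≤ Y t)
    (hY0 : (Y 0) ^ 2 ≤ M₀ ^ 2 / (2 * C₄)) :
    (∀ t : ℝ, 0 ≤ t → t < T → Y t ≤ Y 0 - C₁ * M₀ * t) ∧ T ≤ Y 0 / (C₁ * M₀) := by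
  have hY0nn : 0 ≤ Y 0 := hnn 0 le_rfl hT
  set K : ℝ := C₂ / 2 * lam * C₄ * (2 * Y 0 + 1) + 1 with hK
  have hKpos : 0 < K := by positivity
  clear_value K
  -- key estimate: C₄ * (Y 0 + δ)^2 - M₀^2 bound ⇒ D x strictly below barrier slope
  have key : ∀ t : ℝ, 0 ≤ t → t < T → Y t ≤ Y 0 - C₁ * M₀ * t := by
    intro t ht htT
    -- barrier argument with ε e^{Kx}
    have main : ∀ ε : ℝ, 0 < ε → ε ≤ Real.exp (-(K * t)) →
        Y t ≤ Y 0 - C₁ * M₀ * t + ε * Real.exp (K * t) := by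
      intro ε hε hεle
      set B : ℝ → ℝ := fun x => Y 0 - C₁ * M₀ * x + ε * Real.exp (K * x) with hBdef
      set B' : ℝ → ℝ := fun x => -(C₁ * M₀) + ε * (K * Real.exp (K * x)) with hB'def
      have hB : ∀ x : ℝ, HasDerivAt B (B' x) x := by
        intro x
        have h1 : HasDerivAt (fun y : ℝ => Y 0 - C₁ * M₀ * y) (-(C₁ * M₀)) x := by
          simpa using ((hasDerivAt_id x).const_mul (C₁ * M₀)).const_sub (Y 0)
        have h2 : HasDerivAt (fun y : ℝ => Real.exp (K * y)) (K * Real.exp (K * x)) x := by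
          simpa [mul_comm] using ((hasDerivAt_id x).const_mul K).exp
        exact h1.add (h2.const_mul ε)
      have hfc : ContinuousOn Y (Icc 0 t) := by
        intro x hx
        exact (hY x hx.1 (lt_of_le_of_lt hx.2 htT)).continuousAt.continuousWithinAt
      have hfd : ∀ x ∈ Ico (0:ℝ) t, HasDerivWithinAt Y (D x) (Ici x) x := fun x hx =>
        (hY x hx.1 (lt_trans hx.2 htT)).hasDerivWithinAt
      have ha : Y 0 ≤ B 0 := by
        have h := (Real.exp_pos (K * 0)).le
        have hε' := hε.le
        simp only [hBdef]
        nlinarith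
      have bound : ∀ x ∈ Ico (0:ℝ) t, Y x = B x → D x < B' x := by
        intro x hx hYx
        have hxT : x < T := lt_trans hx.2 htT
        set δ : ℝ := ε * Real.exp (K * x) with hδ
        have hδpos : 0 < δ := by positivity
        have hδ1 : δ ≤ 1 := by
          have : Real.exp (K * x) ≤ Real.exp (K * t) :=
            Real.exp_le_exp.mpr (by nlinarith [hx.1, hx.2.le, hKpos])
          have := mul_le_mul hεle this (Real.exp_pos _).le (Real.exp_pos _).le
          simpa [hδ, ← Real.exp_add] using this
        have hYxle : Y x ≤ Y 0 + δ := by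
          have : B x ≤ Y 0 + δ := by
            have : 0 ≤ C₁ * M₀ * x := mul_nonneg (by positivity) hx.1
            simp only [hBdef]; linarith
          linarith [hYx ▸ this]
        have hYxnn : 0 ≤ Y x := hnn x hx.1 hxT
        have hfinal : D x < -(C₁ * M₀) + K * δ :=
          aux_bound_18 C₁ C₂ C₄ lam M₀ K δ (Y x) (Y 0) (D x) hC₁ hC₂ hC₄ hlam hM hbig hK
            hδpos hδ1 hYxle hYxnn hY0nn hY0 (hD x hx.1 hxT)
        simpa [hB'def, hδ, mul_comm, mul_left_comm, mul_assoc] using hfinal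
      have := image_le_of_deriv_right_lt_deriv_boundary hfc hfd ha hB bound
        (Set.right_mem_Icc.mpr ht)
      simpa [hBdef] using this
    -- take ε → 0
    have : ∀ η : ℝ, 0 < η → Y t ≤ Y 0 - C₁ * M₀ * t + η := by
      intro η hη
      set ε : ℝ := min (Real.exp (-(K * t))) (η * Real.exp (-(K * t))) with hε
      have hεpos : 0 < ε := lt_min (Real.exp_pos _) (by positivity)
      have h := main ε hεpos (min_le_left _ _)
      have : ε * Real.exp (K * t) ≤ η := by
        calc ε * Real.exp (K * t) ≤ η * Real.exp (-(K * t)) * Real.exp (K * t) := by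
              exact mul_le_mul_of_nonneg_right (min_le_right _ _) (Real.exp_pos _).le
          _ = η := by rw [mul_assoc, ← Real.exp_add]; simp
      linarith
    linarith [le_of_forall_pos_le_add this]
  refine ⟨key, ?_⟩
  by_contra h
  push_neg at h
  set s : ℝ := (Y 0 / (C₁ * M₀) + T) / 2 with hs
  have hs1 : Y 0 / (C₁ * M₀) < s := by linarith
  have hs2 : s < T := by linarith
  have hsnn : 0 ≤ s := le_trans (by positivity) hs1.le
  have h1 := key s hsnn hs2
  have h2 := hnn s hsnn hs2
  have : Y 0 < C₁ * M₀ * s := by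
    rw [div_lt_iff₀ (by positivity)] at hs1
    linarith
  linarith
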